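/- Let n ≥ 1 and let X ⊆ [0,1]^{2n+1} be a Kolmogorov-type embedding of a compact metric space X with respect to a Kolmogorov family of covers (F^m)_{m∈ℕ}, with induced transformation L. Then for every continuous f : X → ℝ and every real c with ‖f‖ < c, there exists a continuous g : Z → ℝ such that ‖g‖ ≤ ‖f‖/(2n+1) (in particular ‖g‖ < c/(2n+1)) and ‖f − L(g)‖ < (2n/(2n+1))·c, where ‖·‖ denotes the sup-norm. -/

import Mathlib

open Topology

/-- The topology of pointwise convergence on `C(T, ℝ)`: the topology induced from the
product topology on `ℝ^T` via the canonical injection. -/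
def cpTop (T : Type*) [TopologicalSpace T] : TopologicalSpace C(T, ℝ) :=
  TopologicalSpace.induced (fun f => (f : T → ℝ)) Pi.topologicalSpace

/-- A subset `A` of a topological space is zero-dimensional if the subspace `A` has a
topological base consisting of sets clopen in `A`. -/
def ZeroDimSubset {X : Type*} [TopologicalSpace X] (A : Set X) : Prop :=
  ∀ (a : A) (U : Set A), IsOpen U → a ∈ U → ∃ V : Set A, IsClopen V ∧ a ∈ V ∧ V ⊆ U

/-- The transformation induced by an embedding `X ⊆ Y₁ × ⋯ × Y_k`:
`L g x = g y₁ + ⋯ + g y_k`, where `(y₁, …, y_k)` are the coordinates of `x`, each `yᵢ`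
regarded as a point of the disjoint union `Z = Σ i, Y i`. -/
noncomputable def inducedL {ι : Type*} [Fintype ι] {Y : ι → Type*}
    [∀ i, TopologicalSpace (Y i)] (X : Set (Π i, Y i))
    (g : C((Σ i, Y i), ℝ)) : C(X, ℝ) where
  toFun x := ∑ i, g ⟨i, (x : Π i, Y i) i⟩
  continuous_toFun := by
    apply continuous_finset_sum
    intro i _
    exact g.continuous.comp (continuous_sigmaMk.comp
      ((continuous_apply i).comp continuous_subtype_val))

/-- The embedding `X ⊆ [0,1]^N` separates the cover `Fm = Fm 1 ∪ ⋯ ∪ Fm N` if, for each `i`,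
the images under the `i`-th coordinate projection of distinct members of `Fm i` are
pairwise disjoint. -/
def KolSeparates {N : ℕ} (X : Set (Fin N → unitInterval))
    (Fm : Fin N → Finset (Set X)) : Prop :=
  ∀ i : Fin N, ∀ s ∈ Fm i, ∀ t ∈ Fm i, s ≠ t →
    Disjoint ((fun x : X => (x : Fin N → unitInterval) i) '' s)
      ((fun x : X => (x : Fin N → unitInterval) i) '' t)

/-- A Kolmogorov family of covers of `X ⊆ [0,1]^N` (for dimension parameter `n`):
a sequence of finite covers `F m = F m 1 ∪ ⋯ ∪ F m N` of `X` by closed sets such that each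
point belongs to members of at least `n + 1` of the subfamilies `F m i`, each subfamily
consists of pairwise disjoint sets, and the mesh of `F m` tends to `0` as `m → ∞`. -/
def IsKolmogorovFamily {N : ℕ} (X : Set (Fin N → unitInterval)) (n : ℕ)
    (F : ℕ → Fin N → Finset (Set X)) : Prop :=
  (∀ m i, ∀ s ∈ F m i, IsClosed s) ∧
  (∀ (m : ℕ) (x : X), n + 1 ≤ {i : Fin N | ∃ s ∈ F m i, x ∈ s}.ncard) ∧
  (∀ m i, ∀ s ∈ F m i, ∀ t ∈ F m i, s ≠ t → Disjoint s t) ∧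
  (∀ ε : ℝ, 0 < ε → ∃ M : ℕ, ∀ m ≥ M, ∀ i, ∀ s ∈ F m i, Metric.diam s < ε)

/-- The embedding `X ⊆ [0,1]^N` is of Kolmogorov type with respect to the family `F` if for
every `ε > 0` there is `m` such that `F m` has mesh `< ε` and the embedding separates `F m`. -/
def IsKolmogorovTypeEmbedding {N : ℕ} (X : Set (Fin N → unitInterval))
    (F : ℕ → Fin N → Finset (Set X)) : Prop :=
  ∀ ε : ℝ, 0 < ε → ∃ m : ℕ,
    (∀ i, ∀ s ∈ F m i, Metric.diam s < ε) ∧ KolSeparates X (F m)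

/-- The indicator of a clopen set with a constant value is continuous. -/
lemma clopen_indicator_continuous {α : Type*} [TopologicalSpace α] {U : Set α}
    (hU : IsClopen U) (c : ℝ) : Continuous (U.indicator fun _ => c) := by
  classical
  have h : U.indicator (fun _ => c) = U.piecewise (fun _ => c) (fun _ => 0) := by
    funext a
    by_cases h : a ∈ U <;> simp [Set.indicator_apply, Set.piecewise, h]
  rw [h]
  exact Continuous.piecewise (by simp [hU.frontier_eq]) continuous_const continuous_const

/-- The approximation step for Kolmogorov-type embeddings: for every continuous `f : X → ℝ`
and every `c` with `‖f‖ < c` there is a continuous `g : Z → ℝ` with `‖g‖ ≤ ‖f‖/(2n+1)` and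
`‖f - L g‖ < (2n/(2n+1))·c`, where `‖·‖` is the sup-norm. -/
theorem statement8 {n : ℕ} (hn : 1 ≤ n)
    (X : Set (Fin (2 * n + 1) → unitInterval)) [CompactSpace X]
    (F : ℕ → Fin (2 * n + 1) → Finset (Set X))
    (hF : IsKolmogorovFamily X n F)
    (hemb : IsKolmogorovTypeEmbedding X F) :
    ∀ (f : C(X, ℝ)) (c : ℝ), ‖f‖ < c →
      ∃ g : C((Σ _ : Fin (2 * n + 1), unitInterval), ℝ),
        ‖g‖ ≤ ‖f‖ / (2 * n + 1) ∧
        ‖f - inducedL X g‖ < ((2 * n : ℝ) / (2 * n + 1)) * c := by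
  classical
  obtain ⟨hclosed, hcover, hdisj, -⟩ := hF
  intro f c hfc
  set Nr : ℝ := 2 * (n : ℝ) + 1 with hNr
  have hNrpos : 0 < Nr := by positivity
  have hc : 0 < c := lt_of_le_of_lt (norm_nonneg f) hfc
  have hn1 : (1 : ℝ) ≤ (n : ℝ) := by exact_mod_cast hn
  set δ : ℝ := (n : ℝ) * (c - ‖f‖) / Nr with hδ
  have hδpos : 0 < δ := by
    apply div_pos _ hNrpos
    nlinarith [hfc]
  have huc : UniformContinuous f := CompactSpace.uniformContinuous_of_continuous f.continuous
  obtain ⟨ε, hεpos, hε⟩ := Metric.uniformContinuous_iff.mp huc δ hδpos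
  obtain ⟨m, hmesh, hsep⟩ := hemb ε hεpos
  set M : ℝ := ‖f‖ / Nr with hM
  have hM0 : 0 ≤ M := div_nonneg (norm_nonneg f) hNrpos.le
  set P : Fin (2 * n + 1) → X → unitInterval :=
    fun i x => (x : Fin (2 * n + 1) → unitInterval) i with hP
  have hPcont : ∀ i, Continuous (P i) := fun i => (continuous_apply i).comp continuous_subtype_val
  set v : Set X → ℝ := fun s => if h : s.Nonempty then f h.choose / Nr else 0 with hv
  have hvle : ∀ s, |v s| ≤ M := by
    intro s
    by_cases h : s.Nonempty
    · simp only [hv, dif_pos h]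
      rw [abs_div, abs_of_pos hNrpos, hM]
      apply (div_le_div_iff_of_pos_right hNrpos).mpr
      simpa [Real.norm_eq_abs] using f.norm_coe_le_norm h.choose
    · simp [hv, dif_neg h, hM0]
  have key : ∀ i : Fin (2 * n + 1), ∃ G : BoundedContinuousFunction unitInterval ℝ,
      (∀ y, |G y| ≤ M) ∧ ∀ s ∈ F m i, ∀ x ∈ s, G (P i x) = v s := by
    intro i
    set A : Set X → Set unitInterval := fun s => P i '' s with hA
    have hAclosed : ∀ s ∈ F m i, IsClosed (A s) := fun s hs =>
      (((hclosed m i s hs).isCompact).image (hPcont i)).isClosed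
    set K : Set unitInterval := ⋃ s ∈ F m i, A s with hK
    have hKclosed : IsClosed K :=
      Set.Finite.isClosed_biUnion (F m i).finite_toSet fun s hs => hAclosed s hs
    have hdisjA : ∀ s ∈ F m i, ∀ t ∈ F m i, s ≠ t → Disjoint (A s) (A t) :=
      fun s hs t ht hst => hsep i s hs t ht hst
    have hclopen : ∀ s ∈ F m i, IsClopen ((Subtype.val : ↥K → unitInterval) ⁻¹' A s) := by
      intro s hs
      refine ⟨(hAclosed s hs).preimage continuous_subtype_val, ?_⟩
      rw [← isClosed_compl_iff]
      have hcompl : ((Subtype.val : ↥K → unitInterval) ⁻¹' A s)ᶜ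
          = Subtype.val ⁻¹' (⋃ t ∈ (F m i).erase s, A t) := by
        ext y
        simp only [Set.mem_compl_iff, Set.mem_preimage, Set.mem_iUnion, Finset.mem_erase,
          exists_prop]
        constructor
        · intro hy
          have hyK : (y : unitInterval) ∈ ⋃ s ∈ F m i, A s := y.2
          simp only [Set.mem_iUnion, exists_prop] at hyK
          obtain ⟨t, ht, hyt⟩ := hyK
          exact ⟨t, ⟨fun h => hy (h ▸ hyt), ht⟩, hyt⟩
        · rintro ⟨t, ⟨hts, ht⟩, hyt⟩ hys
          exact (Set.disjoint_left.mp (hdisjA s hs t ht (Ne.symm hts)) hys) hyt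
      rw [hcompl]
      exact (Set.Finite.isClosed_biUnion ((F m i).erase s).finite_toSet fun t ht =>
        hAclosed t (Finset.mem_of_mem_erase ht)).preimage continuous_subtype_val
    set h0 : ↥K → ℝ :=
      fun y => ∑ s ∈ F m i, (A s).indicator (fun _ => v s) (y : unitInterval) with hh0
    have hcont : Continuous h0 := by
      apply continuous_finset_sum
      intro s hs
      have heq : (fun y : ↥K => (A s).indicator (fun _ => v s) (y : unitInterval))
          = ((Subtype.val ⁻¹' A s).indicator fun _ => v s) := by
        funext y
        by_cases h : (y : unitInterval) ∈ A s <;>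
          simp [Set.indicator_apply, h, Set.mem_preimage]
      rw [heq]
      exact clopen_indicator_continuous (hclopen s hs) _
    have hval : ∀ s ∈ F m i, ∀ y : ↥K, (y : unitInterval) ∈ A s → h0 y = v s := by
      intro s hs y hy
      show (∑ t ∈ F m i, (A t).indicator (fun _ => v t) (y : unitInterval)) = v s
      rw [Finset.sum_eq_single s]
      · simp [Set.indicator_of_mem hy]
      · intro t ht hts
        exact Set.indicator_of_notMem
          (fun hyt => (Set.disjoint_left.mp (hdisjA s hs t ht (Ne.symm hts)) hy) hyt) _
      · intro h; exact absurd hs h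
    have hbound : ∀ y : ↥K, |h0 y| ≤ M := by
      intro y
      have hyK : (y : unitInterval) ∈ ⋃ s ∈ F m i, A s := y.2
      simp only [Set.mem_iUnion, exists_prop] at hyK
      obtain ⟨s, hs, hys⟩ := hyK
      rw [hval s hs y hys]
      exact hvle s
    haveI : CompactSpace ↥K := isCompact_iff_compactSpace.mp hKclosed.isCompact
    obtain ⟨G, hGnorm, hGres⟩ :=
      BoundedContinuousFunction.exists_norm_eq_restrict_eq_of_closed
        (BoundedContinuousFunction.mkOfCompact ⟨h0, hcont⟩) hKclosed
    have hGval : ∀ y : ↥K, G (y : unitInterval) = h0 y := by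
      intro y
      have := congrFun (congrArg DFunLike.coe hGres) y
      simpa using this
    refine ⟨G, ?_, ?_⟩
    · intro y
      have h1 : |G y| ≤ ‖G‖ := by simpa [Real.norm_eq_abs] using G.norm_coe_le_norm y
      have h2 : ‖G‖ ≤ M := by
        rw [hGnorm]
        apply (BoundedContinuousFunction.norm_le hM0).mpr
        intro y
        simpa [Real.norm_eq_abs] using hbound y
      exact h1.trans h2
    · intro s hs x hx
      have hmemA : P i x ∈ A s := ⟨x, hx, rfl⟩
      have hmem : P i x ∈ K := by
        rw [hK]
        exact Set.mem_biUnion hs hmemA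
      rw [hGval ⟨P i x, hmem⟩]
      exact hval s hs ⟨P i x, hmem⟩ hmemA
  choose G hG1 hG2 using key
  set gmap : C((Σ _ : Fin (2 * n + 1), unitInterval), ℝ) :=
    ⟨fun z => G z.1 z.2, continuous_sigma fun i => (G i).continuous⟩ with hgmap
  have hgnorm : ‖gmap‖ ≤ M := by
    apply (ContinuousMap.norm_le _ hM0).mpr
    intro z
    simpa [Real.norm_eq_abs, hgmap] using hG1 z.1 z.2
  refine ⟨gmap, hgnorm, ?_⟩
  have hB0 : 0 ≤ (n : ℝ) * (c + ‖f‖) / Nr := by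
    apply div_nonneg _ hNrpos.le
    apply mul_nonneg (Nat.cast_nonneg n)
    nlinarith [norm_nonneg f]
  have hptwise : ∀ x : X, |(f - inducedL X gmap) x| ≤ (n : ℝ) * (c + ‖f‖) / Nr := by
    intro x
    have hLg : (f - inducedL X gmap) x = f x - ∑ i, G i (P i x) := by
      simp only [ContinuousMap.sub_apply]
      congr 1
    rw [hLg]
    have hfx : f x = ∑ _i : Fin (2 * n + 1), f x / Nr := by
      rw [Finset.sum_const, Finset.card_univ, Fintype.card_fin, nsmul_eq_mul]
      push_cast
      rw [hNr]
      field_simp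
    have hsplit : f x - ∑ i, G i (P i x)
        = ∑ i : Fin (2 * n + 1), (f x / Nr - G i (P i x)) := by
      rw [Finset.sum_sub_distrib, ← hfx]
    rw [hsplit]
    set q : Fin (2 * n + 1) → Prop := fun i => ∃ s ∈ F m i, x ∈ s with hq
    have hgood : ∀ i ∈ Finset.univ.filter q, |f x / Nr - G i (P i x)| ≤ δ / Nr := by
      intro i hi
      obtain ⟨s, hs, hxs⟩ := (Finset.mem_filter.mp hi).2
      rw [hG2 i s hs x hxs]
      have hsne : s.Nonempty := ⟨x, hxs⟩
      have hvs : v s = f hsne.choose / Nr := by simp only [hv, dif_pos hsne]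
      rw [hvs, div_sub_div_same, abs_div, abs_of_pos hNrpos]
      apply (div_le_div_iff_of_pos_right hNrpos).mpr
      have hbdd : Bornology.IsBounded s := (hclosed m i s hs).isCompact.isBounded
      have hdist : dist x hsne.choose ≤ Metric.diam s :=
        Metric.dist_le_diam_of_mem hbdd hxs hsne.choose_spec
      have hlt : dist x hsne.choose < ε := lt_of_le_of_lt hdist (hmesh i s hs)
      have := hε hlt
      rw [Real.dist_eq] at this
      exact this.le
    have hbad : ∀ i ∈ Finset.univ.filter (fun i => ¬ q i),
        |f x / Nr - G i (P i x)| ≤ 2 * ‖f‖ / Nr := by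
      intro i _
      have h1 : |f x / Nr - G i (P i x)| ≤ |f x / Nr| + |G i (P i x)| := by
        rw [sub_eq_add_neg]
        exact (abs_add_le _ _).trans (by rw [abs_neg])
      have h2 : |f x / Nr| ≤ ‖f‖ / Nr := by
        rw [abs_div, abs_of_pos hNrpos]
        apply (div_le_div_iff_of_pos_right hNrpos).mpr
        simpa [Real.norm_eq_abs] using f.norm_coe_le_norm x
      have h3 := hG1 i (P i x)
      calc |f x / Nr - G i (P i x)| ≤ ‖f‖ / Nr + M := by
            refine h1.trans (add_le_add h2 h3)
        _ = 2 * ‖f‖ / Nr := by rw [hM]; ring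
    have hcard_good : (Finset.univ.filter q).card ≤ 2 * n + 1 :=
      le_trans (Finset.card_filter_le _ _) (by simp)
    have hcard_bad : (Finset.univ.filter (fun i => ¬ q i)).card ≤ n := by
      have h1 := hcover m x
      have h2 : {i : Fin (2 * n + 1) | ∃ s ∈ F m i, x ∈ s}.ncard
          = (Finset.univ.filter q).card := by
        rw [← Set.ncard_coe_finset]
        congr 1
        ext i
        simp [hq]
      have h3 : (Finset.univ.filter q).card
          + (Finset.univ.filter (fun i => ¬ q i)).card = 2 * n + 1 := by
        rw [Finset.card_filter_add_card_filter_not]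
        simp
      rw [h2] at h1
      omega
    calc |∑ i : Fin (2 * n + 1), (f x / Nr - G i (P i x))|
        ≤ ∑ i : Fin (2 * n + 1), |f x / Nr - G i (P i x)| :=
          Finset.abs_sum_le_sum_abs _ _
      _ = (∑ i ∈ Finset.univ.filter q, |f x / Nr - G i (P i x)|)
          + ∑ i ∈ Finset.univ.filter (fun i => ¬ q i), |f x / Nr - G i (P i x)| :=
          (Finset.sum_filter_add_sum_filter_not _ _ _).symm
      _ ≤ (Finset.univ.filter q).card • (δ / Nr)
          + (Finset.univ.filter (fun i => ¬ q i)).card • (2 * ‖f‖ / Nr) :=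
          add_le_add (Finset.sum_le_card_nsmul _ _ _ hgood)
            (Finset.sum_le_card_nsmul _ _ _ hbad)
      _ ≤ ((2 * n + 1 : ℕ) : ℝ) * (δ / Nr) + (n : ℝ) * (2 * ‖f‖ / Nr) := by
          rw [nsmul_eq_mul, nsmul_eq_mul]
          apply add_le_add
          · apply mul_le_mul_of_nonneg_right _ (by positivity)
            exact_mod_cast hcard_good
          · apply mul_le_mul_of_nonneg_right _ (by positivity)
            exact_mod_cast hcard_bad
      _ = (n : ℝ) * (c + ‖f‖) / Nr := by
          rw [hδ]
          push_cast
          rw [hNr]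
          field_simp
          ring
  have hnorm : ‖f - inducedL X gmap‖ ≤ (n : ℝ) * (c + ‖f‖) / Nr := by
    apply (ContinuousMap.norm_le _ hB0).mpr
    intro x
    simpa [Real.norm_eq_abs] using hptwise x
  refine lt_of_le_of_lt hnorm ?_
  rw [div_mul_eq_mul_div, div_lt_div_iff₀ hNrpos hNrpos]
  nlinarith [hfc, hn1, mul_pos (mul_pos (show (0:ℝ) < (n:ℝ) by linarith) (show (0:ℝ) < c - ‖f‖ by linarith)) hNrpos]
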